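/- Let f_i and f_j be monic Eisenstein polynomials over a discrete valuation ring O with uniformizer t (i.e., all non-leading coefficients have t-order at least 1 and the constant terms have t-order exactly 1), of degrees e_i and e_j respectively, with no common roots. Then the t-adic valuation of the resultant res(f_i, f_j) = det f_i(R(f_j)) (where R(f_j) is the companion matrix of f_j) is at least min(e_i, e_j). -/

import Mathlib

noncomputable def companionMatrix {R : Type*} [CommRing R] (n : ℕ) (p : Polynomial R) :
    Matrix (Fin n) (Fin n) R :=
  Matrix.of fun i j =>
    (if (i : ℕ) = (j : ℕ) + 1 then 1 else 0) + (if (j : ℕ) = n - 1 then -p.coeff i else 0)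


open PowerSeries

section Helpers

variable {k : Type*} [Field k]

lemma X_pow_dvd_iff_le_order {n : ℕ} {φ : PowerSeries k} :
    (X : PowerSeries k) ^ n ∣ φ ↔ (n : ℕ∞) ≤ φ.order := by
  rw [PowerSeries.X_pow_dvd_iff]
  constructor
  · intro h
    exact PowerSeries.nat_le_order φ n h
  · intro h m hm
    exact PowerSeries.coeff_of_lt_order m (lt_of_lt_of_le (Nat.cast_lt.2 hm) h)

lemma le_order_finsum {ι : Type*} (s : Finset ι) (f : ι → PowerSeries k) (n : ℕ∞)
    (h : ∀ i ∈ s, n ≤ (f i).order) : n ≤ (∑ i ∈ s, f i).order := by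
  classical
  induction s using Finset.induction with
  | empty => simp [PowerSeries.order_zero]
  | insert a s hni ih =>
    rw [Finset.sum_insert hni]
    refine le_trans (le_min (h a (Finset.mem_insert_self a s)) (ih fun i hi => h i ?_))
      (PowerSeries.min_order_le_order_add _ _)
    exact Finset.mem_insert_of_mem hi

lemma le_order_finprod {ι : Type*} (s : Finset ι) (f : ι → PowerSeries k) :
    (∑ i ∈ s, (f i).order) ≤ (∏ i ∈ s, f i).order := by
  classical
  induction s using Finset.induction with
  | empty => simp [PowerSeries.order_one]
  | insert a s hni ih =>
    rw [Finset.sum_insert hni, Finset.prod_insert hni]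
    exact le_trans (add_le_add_right ih _) (PowerSeries.le_order_mul _ _)

/-- If a monotone bound holds for the order of every summand, it holds for the sum. -/
lemma bound_order_finsum {ι : Type*} (s : Finset ι) (hs : s.Nonempty)
    (f : ι → PowerSeries k) (t : ℕ∞) (g : ℕ∞ → ℕ∞) (hg : Monotone g)
    (h : ∀ i ∈ s, t ≤ g (f i).order) : t ≤ g ((∑ i ∈ s, f i).order) := by
  classical
  obtain ⟨i₀, hi₀mem, hi₀⟩ := Finset.exists_mem_eq_inf s hs (fun i => (f i).order)
  have hle : (f i₀).order ≤ (∑ i ∈ s, f i).order := by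
    refine le_order_finsum s f _ fun i hi => ?_
    rw [← hi₀]
    exact Finset.inf_le hi
  exact le_trans (h i₀ hi₀mem) (hg hle)

end Helpers

theorem stmt0 {k : Type*} [Field k] (fi fj : Polynomial (PowerSeries k))
    (hfi_monic : fi.Monic) (hfj_monic : fj.Monic)
    (hfi : fi.IsEisensteinAt (Ideal.span {(PowerSeries.X : PowerSeries k)}))
    (hfj : fj.IsEisensteinAt (Ideal.span {(PowerSeries.X : PowerSeries k)}))
    (hcoprime : IsCoprime
      (fi.map (algebraMap (PowerSeries k) (LaurentSeries k)))
      (fj.map (algebraMap (PowerSeries k) (LaurentSeries k)))) :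
    (PowerSeries.X : PowerSeries k) ^ (min fi.natDegree fj.natDegree) ∣
      ((Polynomial.aeval (companionMatrix fj.natDegree fj)) fi).det := by
  classical
  set e := fj.natDegree with he_def
  set ei := fi.natDegree with hei_def
  rcases Nat.eq_zero_or_pos e with he0 | hepos
  · rw [he0, Nat.min_zero, pow_zero]; exact one_dvd _
  rcases Nat.eq_zero_or_pos ei with hi0 | heipos
  · rw [hi0, Nat.zero_min, pow_zero]; exact one_dvd _
  set μ := min ei e with hμ_def
  set C := companionMatrix e fj with hC_def
  have heE' : (e : ℕ∞) ≠ 0 := by exact_mod_cast hepos.ne'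
  have hne : (Finset.univ : Finset (Fin e)).Nonempty := ⟨⟨0, hepos⟩, Finset.mem_univ _⟩
  -- the monotone bound function
  have hg : ∀ a : Fin e, Monotone (fun o : ℕ∞ => (e : ℕ∞) * o + (a : ℕ)) := by
    intro a x y hxy
    exact add_le_add_left (mul_le_mul_right hxy _) _
  -- order of the lower coefficients of fj
  have hcoeffj : ∀ a : Fin e, (1 : ℕ∞) ≤ (-(fj.coeff a)).order := by
    intro a
    have hmem : fj.coeff a ∈ Ideal.span {(X : PowerSeries k)} := hfj.mem a.isLt
    rw [Ideal.mem_span_singleton] at hmem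
    have hdvd : (X : PowerSeries k) ^ 1 ∣ -(fj.coeff a) := by
      rw [pow_one]; exact hmem.neg_right
    exact_mod_cast X_pow_dvd_iff_le_order.1 hdvd
  -- entry bound for the companion matrix C
  have hC : ∀ a b : Fin e, (1 : ℕ∞) + b ≤ (e : ℕ∞) * (C a b).order + a := by
    intro a b
    by_cases h1 : (a : ℕ) = (b : ℕ) + 1
    · have h2 : (b : ℕ) ≠ e - 1 := by
        have := a.isLt
        omega
      have hab : C a b = 1 := by simp [hC_def, companionMatrix, h1, h2]
      rw [hab, PowerSeries.order_one, mul_zero, zero_add]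
      calc (1 : ℕ∞) + b = ((1 + (b : ℕ) : ℕ) : ℕ∞) := by push_cast; ring
      _ ≤ ((a : ℕ) : ℕ∞) := by rw [Nat.cast_le]; omega
    · by_cases h2 : (b : ℕ) = e - 1
      · have h3 : (a : ℕ) ≠ e - 1 + 1 := by
          have := a.isLt
          omega
        have hab : C a b = -(fj.coeff a) := by
          simp [hC_def, companionMatrix, h1, h2, h3]
        rw [hab]
        calc (1 : ℕ∞) + b = ((1 + (b : ℕ) : ℕ) : ℕ∞) := by push_cast; ring
        _ ≤ ((e : ℕ) : ℕ∞) := by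
            rw [Nat.cast_le]
            have := b.isLt
            omega
        _ = (e : ℕ∞) * 1 := by rw [mul_one]
        _ ≤ (e : ℕ∞) * (-(fj.coeff a)).order := mul_le_mul_right (hcoeffj a) _
        _ ≤ (e : ℕ∞) * (-(fj.coeff a)).order + a := le_self_add
      · have hab : C a b = 0 := by simp [hC_def, companionMatrix, h1, h2]
        rw [hab, PowerSeries.order_zero, ENat.mul_top heE', top_add]
        exact le_top
  -- entry bound for powers of C
  have hCpow : ∀ m : ℕ, ∀ a b : Fin e,
      (m : ℕ∞) + b ≤ (e : ℕ∞) * ((C ^ m) a b).order + a := by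
    intro m
    induction m with
    | zero =>
      intro a b
      by_cases h : a = b
      · subst h
        simp [Matrix.one_apply_eq, PowerSeries.order_one]
      · rw [pow_zero, Matrix.one_apply_ne h, PowerSeries.order_zero,
          ENat.mul_top heE', top_add]
        exact le_top
    | succ m ih =>
      intro a b
      rw [pow_succ, Matrix.mul_apply]
      have key : ∀ c : Fin e, ((↑(m + 1) : ℕ∞) + b ≤
          (e : ℕ∞) * ((C ^ m) a c * C c b).order + a) := by
        intro c
        have h1 := ih a c
        have h2 := hC c b
        have hsum : ((m : ℕ∞) + c) + ((1 : ℕ∞) + b) ≤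
            ((e : ℕ∞) * ((C ^ m) a c).order + a) + ((e : ℕ∞) * (C c b).order + c) :=
          add_le_add h1 h2
        have hc : ((c : ℕ) : ℕ∞) ≠ ⊤ := by
          exact (WithTop.coe_ne_top : ((c : ℕ) : ℕ∞) ≠ ⊤)
        have h3 : (↑(m + 1) : ℕ∞) + b + c ≤
            ((e : ℕ∞) * (((C ^ m) a c).order + (C c b).order) + a) + c := by
          calc (↑(m + 1) : ℕ∞) + b + c = ((m : ℕ∞) + c) + ((1 : ℕ∞) + b) := by
                push_cast; ring
          _ ≤ _ := hsum
          _ = (e : ℕ∞) * (((C ^ m) a c).order + (C c b).order) + a + c := by ring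
        have h4 : (↑(m + 1) : ℕ∞) + b ≤
            (e : ℕ∞) * (((C ^ m) a c).order + (C c b).order) + a :=
          (WithTop.add_le_add_iff_right hc).1 h3
        exact le_trans h4
          (add_le_add_left (mul_le_mul_right (PowerSeries.le_order_mul _ _) _) _)
      exact bound_order_finsum Finset.univ hne _ _ _ (hg a) (fun c _ => key c)
  -- entry bound for M = fi(C)
  set M := (Polynomial.aeval C) fi with hM_def
  have hM : ∀ a b : Fin e, (μ : ℕ∞) + b ≤ (e : ℕ∞) * (M a b).order + a := by
    intro a b
    have hexp : M a b = ∑ m ∈ Finset.range (ei + 1), fi.coeff m * (C ^ m) a b := by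
      rw [hM_def, Polynomial.aeval_eq_sum_range]
      rw [Matrix.sum_apply]
      exact Finset.sum_congr rfl fun m _ => by rw [Matrix.smul_apply, smul_eq_mul]
    rw [hexp]
    refine bound_order_finsum _ ⟨0, Finset.mem_range.2 (Nat.succ_pos _)⟩ _ _ _ (hg a)
      (fun m hm => ?_)
    rw [Finset.mem_range] at hm
    rcases Nat.lt_succ_iff_lt_or_eq.1 hm with hlt | heq
    · -- m < ei : coeff divisible by X
      have hmemi : fi.coeff m ∈ Ideal.span {(X : PowerSeries k)} := hfi.mem hlt
      rw [Ideal.mem_span_singleton] at hmemi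
      have hoc : (1 : ℕ∞) ≤ (fi.coeff m).order := by
        have hdvd : (X : PowerSeries k) ^ 1 ∣ fi.coeff m := by rwa [pow_one]
        exact_mod_cast X_pow_dvd_iff_le_order.1 hdvd
      have hord : (1 : ℕ∞) + ((C ^ m) a b).order ≤ (fi.coeff m * (C ^ m) a b).order :=
        le_trans (add_le_add_left hoc _) (PowerSeries.le_order_mul _ _)
      calc (μ : ℕ∞) + b ≤ (e : ℕ∞) + b := by
            refine add_le_add_left ?_ _
            exact_mod_cast min_le_right ei e
      _ ≤ (e : ℕ∞) + ((m : ℕ∞) + b) := by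
            rw [← add_assoc]
            exact add_le_add_left le_self_add _
      _ ≤ (e : ℕ∞) + ((e : ℕ∞) * ((C ^ m) a b).order + a) :=
            add_le_add_right (hCpow m a b) _
      _ = (e : ℕ∞) * (1 + ((C ^ m) a b).order) + a := by ring
      _ ≤ (e : ℕ∞) * (fi.coeff m * (C ^ m) a b).order + a :=
            add_le_add_left (mul_le_mul_right hord _) _
    · -- m = ei : leading coefficient is 1
      subst heq
      have hco : fi.coeff ei = 1 := hfi_monic.coeff_natDegree
      rw [hco, one_mul]
      calc (μ : ℕ∞) + b ≤ (ei : ℕ∞) + b := by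
            refine add_le_add_left ?_ _
            exact_mod_cast min_le_left ei e
      _ ≤ _ := hCpow ei a b
  -- conclude for the determinant
  rw [Matrix.det_apply]
  refine Finset.dvd_sum fun σ _ => ?_
  have hterm : (X : PowerSeries k) ^ μ ∣ ∏ i, M (σ i) i := by
    rw [X_pow_dvd_iff_le_order]
    refine le_trans ?_ (le_order_finprod Finset.univ _)
    -- show (μ : ℕ∞) ≤ ∑ i, (M (σ i) i).order
    set T : ℕ∞ := ∑ i : Fin e, (M (σ i) i).order with hT_def
    by_contra hlt
    push_neg at hlt
    have hTne : T ≠ ⊤ := ne_top_of_lt hlt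
    obtain ⟨n, hn⟩ := Option.ne_none_iff_exists.1 hTne
    rw [show (Option.some n : ℕ∞) = (n : ℕ∞) from rfl] at hn
    have hsum : ∑ i : Fin e, ((μ : ℕ∞) + i) ≤
        ∑ i : Fin e, ((e : ℕ∞) * (M (σ i) i).order + (σ i : ℕ)) :=
      Finset.sum_le_sum fun i _ => hM (σ i) i
    have hS : ∑ i : Fin e, ((σ i : ℕ) : ℕ∞) = ∑ i : Fin e, ((i : ℕ) : ℕ∞) :=
      Equiv.sum_comp σ (fun i => ((i : ℕ) : ℕ∞))
    have hSne : (∑ i : Fin e, ((i : ℕ) : ℕ∞)) ≠ ⊤ := by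
      rw [← Nat.cast_sum]
      exact WithTop.coe_ne_top
    have hL : ∑ i : Fin e, ((μ : ℕ∞) + i) =
        (e : ℕ∞) * (μ : ℕ∞) + ∑ i : Fin e, ((i : ℕ) : ℕ∞) := by
      rw [Finset.sum_add_distrib, Finset.sum_const, Finset.card_univ, Fintype.card_fin,
        nsmul_eq_mul]
    have hR : ∑ i : Fin e, ((e : ℕ∞) * (M (σ i) i).order + (σ i : ℕ)) =
        (e : ℕ∞) * T + ∑ i : Fin e, ((i : ℕ) : ℕ∞) := by
      rw [Finset.sum_add_distrib, ← Finset.mul_sum, hS, hT_def]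
    rw [hL, hR] at hsum
    have hmu : (e : ℕ∞) * (μ : ℕ∞) ≤ (e : ℕ∞) * T :=
      (WithTop.add_le_add_iff_right hSne).1 hsum
    rw [← hn] at hmu hlt
    have hnlt : n < μ := by exact_mod_cast hlt
    have hmu' : e * μ ≤ e * n := by exact_mod_cast hmu
    nlinarith [hepos, hnlt, hmu']
  have hsmul : Equiv.Perm.sign σ • ∏ i, M (σ i) i =
      ((Equiv.Perm.sign σ : ℤ) : PowerSeries k) * ∏ i, M (σ i) i := by
    rw [Units.smul_def, zsmul_eq_mul]
  rw [hsmul]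
  exact hterm.mul_left _
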